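/- Cluster Lemma: Let Δ be a simplicial complex decomposed as a union of collections Δ_σ of simplices indexed by elements σ of a poset P with a unique minimal element, such that (1) each simplex of Δ belongs to exactly one Δ_σ, and (2) for each σ ∈ P, the union of Δ_τ over τ ≤ σ is a subcomplex of Δ. If M_σ is an acyclic matching on Δ_σ for each σ, then the union of the M_σ is an acyclic matching on Δ. -/
import Mathlib


/-- An abstract simplicial complex on vertex type `V`: a collection of nonempty
finite subsets of `V` closed under passing to nonempty subsets. -/
structure ASC (V : Type*) where
  faces : Set (Finset V)
  nonempty_of_mem : ∀ {s : Finset V}, s ∈ faces → s.Nonempty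
  down_closed : ∀ {s t : Finset V}, s ∈ faces → t ⊆ s → t.Nonempty → t ∈ faces

namespace ASC

variable {V W : Type*}

/-- A facet is a maximal face. -/
def IsFacet (K : ASC V) (s : Finset V) : Prop :=
  s ∈ K.faces ∧ ∀ t ∈ K.faces, s ⊆ t → s = t

/-- `v` dominates `v'` if every facet containing `v'` also contains `v`. -/
def Dominates (K : ASC V) (v v' : V) : Prop :=
  v ≠ v' ∧ ∀ F, K.IsFacet F → v' ∈ F → v ∈ F

/-- Deletion of a vertex. -/
def delete (K : ASC V) (v' : V) : ASC V where
  faces := {s ∈ K.faces | v' ∉ s}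
  nonempty_of_mem h := K.nonempty_of_mem h.1
  down_closed hs hts htne := ⟨K.down_closed hs.1 hts htne, fun hmem => hs.2 (hts hmem)⟩

/-- The complex consisting of a single point. -/
def point (p : V) : ASC V where
  faces := {{p}}
  nonempty_of_mem h := by simp only [Set.mem_singleton_iff] at h; subst h; exact ⟨p, by simp⟩
  down_closed := by
    intro s t hs hts htne
    simp only [Set.mem_singleton_iff] at *
    subst hs
    rcases Finset.subset_singleton_iff.mp hts with h | h
    · exact absurd h (Finset.nonempty_iff_ne_empty.mp htne)
    · exact h

/-- Elementary strong collapses from `K` to `L`. -/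
inductive StrongCollapsesTo : ASC V → ASC V → Prop
  | refl (K : ASC V) : StrongCollapsesTo K K
  | step {K L : ASC V} (v v' : V) : K.Dominates v v' →
      StrongCollapsesTo (K.delete v') L → StrongCollapsesTo K L

/-- A complex is strongly collapsible if it strong collapses to a point. -/
def StronglyCollapsible (K : ASC V) : Prop :=
  ∃ p : V, StrongCollapsesTo K (ASC.point p)

/-- Elementary collapses (free face removals) from `K` to `L`. -/
inductive CollapsesTo : ASC V → ASC V → Prop
  | refl (K : ASC V) : CollapsesTo K K
  | step {K L M : ASC V} (σ τ : Finset V) :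
      σ ∈ K.faces → τ ∈ K.faces → σ ⊂ τ →
      (∀ ρ ∈ K.faces, σ ⊂ ρ → ρ = τ) →
      L.faces = K.faces \ {σ, τ} →
      CollapsesTo L M → CollapsesTo K M

/-- A complex is collapsible if it collapses to a point. -/
def Collapsible (K : ASC V) : Prop :=
  ∃ p : V, CollapsesTo K (ASC.point p)

/-- The image complex along a vertex map. -/
def map [DecidableEq W] (f : V → W) (K : ASC V) : ASC W where
  faces := (Finset.image f) '' K.faces
  nonempty_of_mem := by
    rintro s ⟨t, ht, rfl⟩
    exact (K.nonempty_of_mem ht).image f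
  down_closed := by
    rintro s t ⟨u, hu, rfl⟩ hts htne
    obtain ⟨w, hw, rfl⟩ := Finset.subset_image_iff.mp hts
    exact ⟨w, K.down_closed hu hw (Finset.image_nonempty.mp htne), rfl⟩

/-- The join of two complexes on a common vertex type (intended for complexes
with disjoint vertex sets). -/
def join [DecidableEq V] (A B : ASC V) : ASC V where
  faces := A.faces ∪ B.faces ∪ {s | ∃ a ∈ A.faces, ∃ b ∈ B.faces, s = a ∪ b}
  nonempty_of_mem := by
    rintro s (⟨h | h⟩ | ⟨a, ha, b, hb, rfl⟩)
    · exact A.nonempty_of_mem h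
    · exact B.nonempty_of_mem h
    · exact (A.nonempty_of_mem ha).mono Finset.subset_union_left
  down_closed := by
    rintro s t (⟨h | h⟩ | ⟨a, ha, b, hb, rfl⟩) hts htne
    · exact Or.inl (Or.inl (A.down_closed h hts htne))
    · exact Or.inl (Or.inr (B.down_closed h hts htne))
    · by_cases hta : (t ∩ a).Nonempty
      · by_cases htb : (t \ a).Nonempty
        · refine Or.inr ⟨t ∩ a, A.down_closed ha Finset.inter_subset_right hta,
            t \ a, B.down_closed hb ?_ htb, by ext x; simp only [Finset.mem_union, Finset.mem_inter, Finset.mem_sdiff]; tauto⟩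
          intro x hx
          rcases Finset.mem_union.mp (hts (Finset.mem_sdiff.mp hx).1) with h1 | h1
          · exact absurd h1 (Finset.mem_sdiff.mp hx).2
          · exact h1
        · refine Or.inl (Or.inl (A.down_closed ha ?_ htne))
          intro x hx
          by_contra hxa
          exact htb ⟨x, Finset.mem_sdiff.mpr ⟨hx, hxa⟩⟩
      · refine Or.inl (Or.inr (B.down_closed hb ?_ htne))
        intro x hx
        rcases Finset.mem_union.mp (hts hx) with h1 | h1
        · exact absurd ⟨x, Finset.mem_inter.mpr ⟨hx, h1⟩⟩ hta
        · exact h1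

/-- Disjoint union of two complexes. -/
def disjUnion [DecidableEq V] [DecidableEq W] (K : ASC V) (L : ASC W) : ASC (V ⊕ W) where
  faces := (K.map Sum.inl).faces ∪ (L.map Sum.inr).faces
  nonempty_of_mem := by
    rintro s (h | h)
    · exact (K.map Sum.inl).nonempty_of_mem h
    · exact (L.map Sum.inr).nonempty_of_mem h
  down_closed := by
    rintro s t (h | h) hts htne
    · exact Or.inl ((K.map Sum.inl).down_closed h hts htne)
    · exact Or.inr ((L.map Sum.inr).down_closed h hts htne)

/-- Connectivity of a complex via edge paths. -/
def Connected [DecidableEq V] (K : ASC V) : Prop :=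
  ∀ u v : V, {u} ∈ K.faces → {v} ∈ K.faces →
    ∃ (k : ℕ) (c : ℕ → V), c 0 = u ∧ c k = v ∧
      ∀ i < k, ({c i, c (i + 1)} : Finset V) ∈ K.faces

/-- A flag complex: every set of pairwise adjacent vertices spans a simplex. -/
def IsFlag [DecidableEq V] (K : ASC V) : Prop :=
  ∀ s : Finset V, s.Nonempty → (∀ v ∈ s, ({v} : Finset V) ∈ K.faces) →
    (∀ u ∈ s, ∀ v ∈ s, u ≠ v → ({u, v} : Finset V) ∈ K.faces) → s ∈ K.faces

/-- A tree: a connected `1`-dimensional complex with no (injective) cycles. -/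
def IsTree [DecidableEq V] (K : ASC V) : Prop :=
  (∀ s ∈ K.faces, s.card ≤ 2) ∧ K.Connected ∧
    ¬ ∃ (k : ℕ) (c : ℕ → V), 3 ≤ k ∧ (∀ i < k, ∀ j < k, c i = c j → i = j) ∧
      (∀ i < k, ({c i, c (i + 1)} : Finset V) ∈ K.faces) ∧ c k = c 0

/-- The star of a vertex. -/
def star [DecidableEq V] (K : ASC V) (v : V) : ASC V where
  faces := {s ∈ K.faces | insert v s ∈ K.faces}
  nonempty_of_mem h := K.nonempty_of_mem h.1
  down_closed := by
    rintro s t ⟨hs, hvs⟩ hts htne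
    exact ⟨K.down_closed hs hts htne,
      K.down_closed hvs (Finset.insert_subset_insert v hts) (Finset.insert_nonempty v t)⟩

/-- The star cluster of a simplex. -/
def starCluster [DecidableEq V] (K : ASC V) (σ : Finset V) : ASC V where
  faces := ⋃ v ∈ σ, (K.star v).faces
  nonempty_of_mem := by
    rintro s hs
    simp only [Set.mem_iUnion] at hs
    obtain ⟨v, _, hv⟩ := hs
    exact (K.star v).nonempty_of_mem hv
  down_closed := by
    intro s t hs hts htne
    simp only [Set.mem_iUnion] at *
    obtain ⟨v, hvσ, hv⟩ := hs
    exact ⟨v, hvσ, (K.star v).down_closed hv hts htne⟩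

end ASC

/-- A nontrivial closed V-path for a discrete vector field. -/
def hasClosedPath {V : Type*} (S : Set (Finset V × Finset V)) : Prop :=
  ∃ (k : ℕ) (α β : ℕ → Finset V), 0 < k ∧
    (∀ i < k, (α i, β i) ∈ S ∧ α (i + 1) ⊆ β i ∧
      (β i).card = (α (i + 1)).card + 1 ∧ α (i + 1) ≠ α i) ∧
    α k = α 0

theorem hasClosedPath.mono {V : Type*} {S T : Set (Finset V × Finset V)}
    (h : hasClosedPath S) (hST : S ⊆ T) : hasClosedPath T := by
  obtain ⟨k, α, β, hk, hstep, hcl⟩ := h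
  exact ⟨k, α, β, hk, fun i hi => ⟨hST (hstep i hi).1, (hstep i hi).2.1,
    (hstep i hi).2.2.1, (hstep i hi).2.2.2⟩, hcl⟩

/-- A discrete vector field on a collection `C` of simplices: codimension-one
pairs from `C` with each simplex occurring in at most one pair. -/
def IsMatching {V : Type*} (C : Set (Finset V)) (M : Set (Finset V × Finset V)) : Prop :=
  (∀ p ∈ M, p.1 ∈ C ∧ p.2 ∈ C ∧ p.1 ⊆ p.2 ∧ p.2.card = p.1.card + 1) ∧
  (∀ p ∈ M, ∀ q ∈ M, p ≠ q → p.1 ≠ q.1 ∧ p.1 ≠ q.2 ∧ p.2 ≠ q.1 ∧ p.2 ≠ q.2)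

/-- An acyclic matching: a discrete vector field with no nontrivial closed V-path. -/
def IsAcyclicMatching {V : Type*} (C : Set (Finset V)) (M : Set (Finset V × Finset V)) : Prop :=
  IsMatching C M ∧ ¬ hasClosedPath M

/-- A gradient vector field on a complex `K`. -/
def IsGVF {V : Type*} (K : ASC V) (S : Set (Finset V × Finset V)) : Prop :=
  IsAcyclicMatching K.faces S

theorem IsGVF.mono {V : Type*} {K : ASC V} {S T : Set (Finset V × Finset V)}
    (h : IsGVF K T) (hST : S ⊆ T) : IsGVF K S :=
  ⟨⟨fun p hp => h.1.1 p (hST hp), fun p hp q hq => h.1.2 p (hST hp) q (hST hq)⟩,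
    fun hc => h.2 (hc.mono hST)⟩

/-- The Morse complex of `K`: vertices are primitive gradient vector fields
(codimension-one pairs), faces are gradient vector fields. -/
def MorseComplex {V : Type*} (K : ASC V) : ASC (Finset V × Finset V) where
  faces := {s | s.Nonempty ∧ IsGVF K ↑s}
  nonempty_of_mem h := h.1
  down_closed := by
    intro s t hs hts htne
    exact ⟨htne, hs.2.mono (Finset.coe_subset.mpr hts)⟩

section Spaces

/-- The geometric realization of a complex on a finite vertex type. -/
abbrev ASC.realization {V : Type*} [Fintype V] (K : ASC V) : Type _ :=
  {f : V → ℝ // (∀ v, 0 ≤ f v) ∧ (∑ v, f v) = 1 ∧ ∃ s ∈ K.faces, ∀ v, f v ≠ 0 → v ∈ s}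

/-- The `n`-sphere. -/
abbrev Sph (n : ℕ) := Metric.sphere (0 : EuclideanSpace ℝ (Fin (n + 1))) 1

noncomputable def spherePt (n : ℕ) : Sph n :=
  ⟨EuclideanSpace.single 0 1, by
    simp [mem_sphere_zero_iff_norm, EuclideanSpace.norm_single]⟩

/-- The wedge of `k` copies of the `n`-sphere (a point if `k = 0`). -/
def Wedge (k n : ℕ) : Type :=
  Quot (fun p q : (Fin k × Sph n) ⊕ Unit =>
    (∃ i : Fin k, p = Sum.inl (i, spherePt n)) ∧ q = Sum.inr ())

noncomputable instance (k n : ℕ) : TopologicalSpace (Wedge k n) := by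
  unfold Wedge; infer_instance

/-- Unreduced suspension. -/
def Susp (X : Type*) [TopologicalSpace X] : Type _ :=
  Quot (fun p q : X × unitInterval => p.2 = q.2 ∧ (p.2 = 0 ∨ p.2 = 1))

instance (X : Type*) [TopologicalSpace X] : TopologicalSpace (Susp X) := by
  unfold Susp; infer_instance

/-- Iterated suspension, as an operation on bundled topological spaces. -/
noncomputable def iterSusp : ℕ → TopCat → TopCat
  | 0, X => X
  | (n + 1), X => TopCat.of (Susp (iterSusp n X))

end Spaces

section Graphs

/-- The `1`-dimensional complex spanned by a set of (edge) finsets. -/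
def graphASC {V : Type*} (E : Set (Finset V)) : ASC V where
  faces := {s | s.Nonempty ∧ ∃ e ∈ E, s ⊆ e}
  nonempty_of_mem h := h.1
  down_closed := by
    rintro s t ⟨_, e, he, hse⟩ hts htne
    exact ⟨htne, e, he, hts.trans hse⟩

/-- The path of length `u` on vertices `0, 1, …, u`. -/
def pathComplex (u : ℕ) : ASC (Fin (u + 1)) :=
  graphASC {e | ∃ i : Fin u, e = {i.castSucc, i.succ}}

/-- Vertex type for a path of length `t` with extended stars `S_{m,n}` and
`S_{k,l}` attached at the two endpoints. -/
abbrev WGV (t m n k l : ℕ) :=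
  Fin (t + 1) ⊕ (Fin m ⊕ Fin n × Fin 2) ⊕ (Fin k ⊕ Fin l × Fin 2)

/-- The graph `P_t ∨ S_{m,n} ∨ S_{k,l}`: the extended star `S_{m,n}` (a one-point
union of `m` paths of length 1 and `n` paths of length 2) has its center at the
endpoint `v₀` of the path, and `S_{k,l}` has its center at the endpoint `v_t`.
With `t = 0` (and `k = l = 0`) this is the extended star graph `S_{m,n}` itself. -/
def wedgeGraph (t m n k l : ℕ) : ASC (WGV t m n k l) :=
  graphASC {e |
    (∃ i : Fin t, e = {Sum.inl i.castSucc, Sum.inl i.succ}) ∨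
    (∃ j : Fin m, e = {Sum.inl 0, Sum.inr (Sum.inl (Sum.inl j))}) ∨
    (∃ i : Fin n, e = {Sum.inl 0, Sum.inr (Sum.inl (Sum.inr (i, 0)))}) ∨
    (∃ i : Fin n, e = {Sum.inr (Sum.inl (Sum.inr (i, 0))), Sum.inr (Sum.inl (Sum.inr (i, 1)))}) ∨
    (∃ j : Fin k, e = {Sum.inl (Fin.last t), Sum.inr (Sum.inr (Sum.inl j))}) ∨
    (∃ s : Fin l, e = {Sum.inl (Fin.last t), Sum.inr (Sum.inr (Sum.inr (s, 0)))}) ∨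
    (∃ s : Fin l, e = {Sum.inr (Sum.inr (Sum.inr (s, 0))), Sum.inr (Sum.inr (Sum.inr (s, 1)))})}

/-- `K ∨_v P_m`: attach a path of length `m` to the vertex `v` of `K` by one
endpoint. -/
def attachPath {V : Type*} [DecidableEq V] (K : ASC V) (v : V) (m : ℕ) : ASC (V ⊕ Fin m) where
  faces := (K.map Sum.inl).faces ∪
    {s | s.Nonempty ∧ ∃ e : Finset (V ⊕ Fin m),
      ((∃ i : Fin m, i.val = 0 ∧ e = {Sum.inl v, Sum.inr i}) ∨
       (∃ i j : Fin m, j.val = i.val + 1 ∧ e = {Sum.inr i, Sum.inr j})) ∧ s ⊆ e}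
  nonempty_of_mem := by
    rintro s (h | h)
    · exact (K.map Sum.inl).nonempty_of_mem h
    · exact h.1
  down_closed := by
    rintro s t (h | ⟨_, e, he, hse⟩) hts htne
    · exact Or.inl ((K.map Sum.inl).down_closed h hts htne)
    · exact Or.inr ⟨htne, e, he, hts.trans hse⟩

end Graphs

section Posets

/-- An alternating cycle `b₁ ≻ a₁ ≺ b₂ ≻ a₂ ≺ ⋯ ≺ b_p ≻ a_p ≺ b₁` for a set of
covering pairs in a poset. -/
def HasPosetCycle {P : Type*} [PartialOrder P] (S : Set (P × P)) : Prop :=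
  ∃ p : ℕ, 2 ≤ p ∧ ∃ a b : ℕ → P,
    (∀ i < p, (a i, b i) ∈ S) ∧
    (∀ i < p, a i ⋖ b ((i + 1) % p)) ∧
    (∀ i < p, ∀ j < p, a i = a j → i = j) ∧
    (∀ i < p, ∀ j < p, b i = b j → i = j)

theorem HasPosetCycle.mono {P : Type*} [PartialOrder P] {S T : Set (P × P)}
    (h : HasPosetCycle S) (hST : S ⊆ T) : HasPosetCycle T := by
  obtain ⟨p, hp, a, b, h1, h2, h3, h4⟩ := h
  exact ⟨p, hp, a, b, fun i hi => hST (h1 i hi), h2, h3, h4⟩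

/-- The complex `f(P)` of acyclic matchings on the Hasse diagram of a poset `P`:
vertices are covering pairs, faces are acyclic matchings. -/
def posetMatchingComplex (P : Type*) [PartialOrder P] : ASC (P × P) where
  faces := {s | s.Nonempty ∧ (∀ p ∈ s, p.1 ⋖ p.2) ∧
    (∀ p ∈ s, ∀ q ∈ s, p ≠ q → p.1 ≠ q.1 ∧ p.1 ≠ q.2 ∧ p.2 ≠ q.1 ∧ p.2 ≠ q.2) ∧
    ¬ HasPosetCycle (↑s : Set (P × P))}
  nonempty_of_mem h := h.1
  down_closed := by
    intro s t hs hts htne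
    refine ⟨htne, fun p hp => hs.2.1 p (hts hp),
      fun p hp q hq => hs.2.2.1 p (hts hp) q (hts hq), fun hc => hs.2.2.2 ?_⟩
    exact hc.mono (Finset.coe_subset.mpr hts)

end Posets

/-- Cluster Lemma: if a simplicial complex is decomposed into
collections `D σ` indexed by a poset `P` with a unique minimal element, each simplex
lying in exactly one `D σ` and each union `⋃_{τ ≤ σ} D τ` being a subcomplex, then a
union of acyclic matchings on the pieces is an acyclic matching on the whole complex. -/
theorem cluster_lemma {V P : Type*} [PartialOrder P] (Δ : ASC V)
    (D : P → Set (Finset V))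
    (hmin : ∃! p : P, ∀ q : P, q ≤ p → q = p)
    (hD : ∀ σ : P, D σ ⊆ Δ.faces)
    (hpart : ∀ s ∈ Δ.faces, ∃! σ : P, s ∈ D σ)
    (hsub : ∀ σ : P, ∀ s ∈ ⋃ τ ∈ {τ : P | τ ≤ σ}, D τ, ∀ t ⊆ s, t.Nonempty →
      t ∈ ⋃ τ ∈ {τ : P | τ ≤ σ}, D τ)
    (M : P → Set (Finset V × Finset V))
    (hM : ∀ σ : P, IsAcyclicMatching (D σ) (M σ)) :
    IsAcyclicMatching Δ.faces (⋃ σ : P, M σ) := by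
  classical
  -- basic facts
  have hcomp : ∀ σ : P, ∀ p ∈ M σ, p.1 ∈ D σ ∧ p.2 ∈ D σ ∧ p.1 ⊆ p.2 ∧
      p.2.card = p.1.card + 1 := fun σ p hp => (hM σ).1.1 p hp
  -- partition uniqueness
  have huniq : ∀ {s : Finset V} {σ τ : P}, s ∈ D σ → s ∈ D τ → σ = τ := by
    intro s σ τ hσ hτ
    obtain ⟨ρ, _, hρu⟩ := hpart s (hD σ hσ)
    exact (hρu σ hσ).trans (hρu τ hτ).symm
  constructor
  · constructor
    · rintro p hp
      obtain ⟨σ, hσ⟩ := Set.mem_iUnion.mp hp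
      obtain ⟨h1, h2, h3, h4⟩ := hcomp σ p hσ
      exact ⟨hD σ h1, hD σ h2, h3, h4⟩
    · rintro p hp q hq hpq
      obtain ⟨σ, hσ⟩ := Set.mem_iUnion.mp hp
      obtain ⟨τ, hτ⟩ := Set.mem_iUnion.mp hq
      by_cases hστ : σ = τ
      · subst hστ
        exact (hM σ).1.2 p hσ q hτ hpq
      · obtain ⟨p1, p2, _, _⟩ := hcomp σ p hσ
        obtain ⟨q1, q2, _, _⟩ := hcomp τ q hτ
        refine ⟨?_, ?_, ?_, ?_⟩ <;> intro he <;> apply hστ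
        · exact huniq p1 (he ▸ q1)
        · exact huniq p1 (he ▸ q2)
        · exact huniq p2 (he ▸ q1)
        · exact huniq p2 (he ▸ q2)
  · rintro ⟨k, α, β, hk, hstep, hcl⟩
    -- assign a cluster index to each step
    set σ : ℕ → P := fun i =>
      if h : i < k then Classical.choose (Set.mem_iUnion.mp (hstep i h).1)
      else Classical.choose (Set.mem_iUnion.mp (hstep 0 hk).1) with hσdef
    have hmem : ∀ i, i < k → (α i, β i) ∈ M (σ i) := by
      intro i hi
      simp only [hσdef, dif_pos hi]
      exact Classical.choose_spec (Set.mem_iUnion.mp (hstep i hi).1)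
    have hαD : ∀ i, i < k → α i ∈ D (σ i) := fun i hi => (hcomp _ _ (hmem i hi)).1
    have hβD : ∀ i, i < k → β i ∈ D (σ i) := fun i hi => (hcomp _ _ (hmem i hi)).2.1
    -- the indices weakly decrease along the path
    have hle : ∀ i, i < k → σ ((i + 1) % k) ≤ σ i := by
      intro i hi
      have hj : (i + 1) % k < k := Nat.mod_lt _ hk
      have hαeq : α ((i + 1) % k) = α (i + 1) := by
        rcases Nat.lt_or_ge (i + 1) k with h | h
        · rw [Nat.mod_eq_of_lt h]
        · have : i + 1 = k := le_antisymm hi h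
          rw [this, Nat.mod_self, ← hcl]
      have hsubβ : α (i + 1) ⊆ β i := (hstep i hi).2.1
      have hβmem : β i ∈ ⋃ τ ∈ {τ : P | τ ≤ σ i}, D τ := by
        exact Set.mem_biUnion (le_refl (σ i)) (hβD i hi)
      have hαne : (α ((i + 1) % k)).Nonempty :=
        Δ.nonempty_of_mem (hD _ (hαD _ hj))
      have := hsub (σ i) (β i) hβmem (α (i + 1)) hsubβ (hαeq ▸ hαne)
      obtain ⟨T, ⟨τ, rfl⟩, hT⟩ := this
      simp only [Set.mem_iUnion, Set.mem_setOf_eq] at hT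
      obtain ⟨hτle, hτmem⟩ := hT
      have : τ = σ ((i + 1) % k) := huniq (hαeq ▸ hτmem) (hαD _ hj)
      exact this ▸ hτle
    -- all indices ≤ σ 0
    have hle0 : ∀ i, i < k → σ i ≤ σ 0 := by
      intro i
      induction i with
      | zero => intro _; exact le_refl _
      | succ n ih =>
        intro hn
        have hn' : n < k := Nat.lt_of_succ_lt hn
        have := hle n hn'
        rw [Nat.mod_eq_of_lt hn] at this
        exact this.trans (ih hn')
    -- σ 0 ≤ all indices, going backwards around the cycle
    have hge0 : ∀ m, 1 ≤ m → m ≤ k → σ 0 ≤ σ (k - m) := by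
      intro m
      induction m with
      | zero => intro h; omega
      | succ n ih =>
        intro _ hmk
        rcases Nat.eq_or_lt_of_le hmk with h | h
        ·
          rcases Nat.eq_zero_or_pos n with rfl | hn
          · -- σ 0 ≤ σ (k - 1): from hle (k-1)
            have hk1 : k - 1 < k := Nat.sub_lt hk one_pos
            have := hle (k - 1) hk1
            have : σ ((k - 1 + 1) % k) ≤ σ (k - 1) := this
            rw [Nat.sub_add_cancel hk, Nat.mod_self] at this
            exact this
          · have h1 : σ 0 ≤ σ (k - n) := ih hn (by omega)
            have h2 : σ ((k - (n + 1) + 1) % k) ≤ σ (k - (n + 1)) :=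
              hle (k - (n + 1)) (by omega)
            have he : k - (n + 1) + 1 = k - n := by omega
            rw [he, Nat.mod_eq_of_lt (by omega)] at h2
            exact h1.trans h2
        · rcases Nat.eq_zero_or_pos n with rfl | hn
          · have hk1 : k - 1 < k := Nat.sub_lt hk one_pos
            have h2 := hle (k - 1) hk1
            rw [Nat.sub_add_cancel hk, Nat.mod_self] at h2
            exact h2
          · have h1 : σ 0 ≤ σ (k - n) := ih hn (by omega)
            have h2 : σ ((k - (n + 1) + 1) % k) ≤ σ (k - (n + 1)) :=
              hle (k - (n + 1)) (by omega)
            have he : k - (n + 1) + 1 = k - n := by omega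
            rw [he, Nat.mod_eq_of_lt (by omega)] at h2
            exact h1.trans h2
    have heq : ∀ i, i < k → σ i = σ 0 := by
      intro i hi
      have h1 := hle0 i hi
      have h2 := hge0 (k - i) (by omega) (by omega)
      rw [show k - (k - i) = i by omega] at h2
      exact le_antisymm h1 h2
    -- the whole cycle lies in M (σ 0)
    apply (hM (σ 0)).2
    exact ⟨k, α, β, hk, fun i hi =>
      ⟨(heq i hi) ▸ hmem i hi, (hstep i hi).2.1, (hstep i hi).2.2.1,
        (hstep i hi).2.2.2⟩, hcl⟩
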